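/- arXiv:1409.5937 — 2 statements merged into one kernel-verified Lean document; each statement's English description precedes it below -/
import Mathlib

section
/- Robustness property of DRL: Let (Ω, F, P) be a probability space, H a real Hilbert space, θ* ∈ H, ε ≥ 0, α ∈ (0, 1/2), β* ∈ (0, α), and γ with 0 ≤ γ < (α − β*)/(1 − β*). Let θ̂_1, …, θ̂_k : Ω → H be independent random variables, and suppose there is a subset J ⊆ {1, …, k} with |J| ≥ (1 − γ)·k such that P(‖θ̂_j − θ*‖ > ε) ≤ β* for every j ∈ J (the random variables with indices outside J are arbitrary). Let θ̃ : Ω → H be any random variable such that for every ω ∈ Ω, θ̃(ω) is a geometric median of θ̂_1(ω), …, θ̂_k(ω). Then P(‖θ̃ − θ*‖ ≤ C_α · ε) ≥ 1 − exp(−k·(1 − γ)·ψ((α − γ)/(1 − γ), β*)). -/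
open scoped BigOperators
open MeasureTheory ProbabilityTheory

/-- A point `m` is a geometric median of the points `θ 1, …, θ k` if it minimizes
`y ↦ ∑ j, ‖y - θ j‖`. -/
def IsGeomMedian {H : Type*} [NormedAddCommGroup H] {k : ℕ} (θ : Fin k → H) (m : H) : Prop :=
  ∀ y : H, ∑ j, ‖m - θ j‖ ≤ ∑ j, ‖y - θ j‖

/-- The constant `C_α = (1 - α) √(1/(1 - 2α))`. -/
noncomputable def Cconst (α : ℝ) : ℝ := (1 - α) * Real.sqrt (1 / (1 - 2 * α))

/-- `ψ(α, β) = (1 - α) log((1-α)/(1-β)) + α log(α/β)`. -/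
noncomputable def psi (α β : ℝ) : ℝ :=
  (1 - α) * Real.log ((1 - α) / (1 - β)) + α * Real.log (α / β)

lemma sqrt_add_le {A B : ℝ} (hA : 0 < A) (hB : 0 ≤ B) :
    Real.sqrt (A ^ 2 + B) ≤ A + B / (2 * A) := by
  have h1 : 0 ≤ A + B / (2 * A) := by positivity
  have : A ^ 2 + B ≤ (A + B / (2 * A)) ^ 2 := by
    have h2 : (A + B / (2 * A)) ^ 2 = A ^ 2 + B + (B / (2 * A)) ^ 2 := by
      field_simp; ring
    nlinarith [sq_nonneg (B / (2 * A))]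
  calc Real.sqrt (A ^ 2 + B) ≤ Real.sqrt ((A + B / (2 * A)) ^ 2) := Real.sqrt_le_sqrt this
    _ = A + B / (2 * A) := Real.sqrt_sq h1

lemma cos_ineq {H : Type*} [NormedAddCommGroup H] [InnerProductSpace ℝ H]
    (v w : H) (r d : ℝ) (hr : 0 ≤ r) (hd : r < d) (hv : ‖v‖ = d) (hw : ‖w‖ ≤ r) :
    d * Real.sqrt (1 - r ^ 2 / d ^ 2) * ‖v - w‖ ≤ inner ℝ (v - w) v := by
  have hd0 : 0 < d := lt_of_le_of_lt hr hd
  set s : ℝ := inner ℝ w v with hs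
  have hcs : s ^ 2 ≤ ‖w‖ ^ 2 * d ^ 2 := by
    have := abs_real_inner_le_norm w v
    rw [hv] at this
    nlinarith [abs_nonneg s, sq_abs s]
  have hsle : s ≤ r * d := by
    have := abs_real_inner_le_norm w v
    rw [hv] at this
    nlinarith [le_abs_self s, mul_le_mul_of_nonneg_right hw hd0.le]
  have hinner : (inner ℝ (v - w) v : ℝ) = d ^ 2 - s := by
    rw [inner_sub_left, real_inner_self_eq_norm_sq, hv, hs, real_inner_comm]
  have hnorm : ‖v - w‖ ^ 2 = d ^ 2 - 2 * s + ‖w‖ ^ 2 := by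
    rw [norm_sub_sq_real, hv, real_inner_comm, ← hs]
  have hc2 : Real.sqrt (1 - r ^ 2 / d ^ 2) ^ 2 = 1 - r ^ 2 / d ^ 2 := by
    apply Real.sq_sqrt
    rw [sub_nonneg, div_le_one (by positivity)]
    nlinarith
  have hrhs : (0:ℝ) ≤ d ^ 2 - s := by nlinarith
  -- compare squares
  have key : (d * Real.sqrt (1 - r ^ 2 / d ^ 2) * ‖v - w‖) ^ 2 ≤ (d ^ 2 - s) ^ 2 := by
    have hw2 : ‖w‖ ^ 2 ≤ r ^ 2 := by nlinarith [norm_nonneg w]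
    have expand : (d * Real.sqrt (1 - r ^ 2 / d ^ 2) * ‖v - w‖) ^ 2
        = (d ^ 2 - r ^ 2) * (d ^ 2 - 2 * s + ‖w‖ ^ 2) := by
      rw [mul_pow, mul_pow, hc2, hnorm]
      field_simp
    rw [expand]
    nlinarith [sq_nonneg (s - r ^ 2), sq_nonneg (s - d ^ 2),
      mul_nonneg (sq_nonneg r) (sub_nonneg.mpr hcs),
      mul_nonneg (mul_nonneg (sub_nonneg.mpr hw2) (sub_nonneg.mpr hd.le)) (add_pos hd0 (lt_of_le_of_lt hr hd)).le]
  have hlhs0 : 0 ≤ d * Real.sqrt (1 - r ^ 2 / d ^ 2) * ‖v - w‖ := by positivity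
  rw [hinner]
  nlinarith [key, hlhs0, hrhs]

set_option maxHeartbeats 1000000 in
lemma median_close {H : Type*} [NormedAddCommGroup H] [InnerProductSpace ℝ H]
    {k : ℕ} (hk : 0 < k) (θ : Fin k → H) (m z : H) (hm : IsGeomMedian θ m)
    {α ε : ℝ} (hα : α ∈ Set.Ioo (0:ℝ) (1/2)) (hε : 0 ≤ ε)
    (hcard : ((Finset.univ.filter (fun j => ε < ‖θ j - z‖)).card : ℝ) ≤ α * k) :
    ‖m - z‖ ≤ Cconst α * ε := by
  obtain ⟨hα0, hα2⟩ := hα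
  have h2α : (0:ℝ) < 1 - 2 * α := by linarith
  have hα1 : α < 1 := by linarith
  have hC0 : 0 ≤ Cconst α := mul_nonneg (by linarith) (Real.sqrt_nonneg _)
  have hC1 : 1 ≤ Cconst α := by
    have h1 : Cconst α = Real.sqrt ((1 - α) ^ 2 * (1 / (1 - 2 * α))) := by
      unfold Cconst
      rw [Real.sqrt_mul (sq_nonneg _), Real.sqrt_sq (by linarith)]
    rw [h1, Real.one_le_sqrt, mul_one_div, le_div_iff₀ h2α]
    nlinarith
  set d := ‖m - z‖ with hd_def
  by_cases hdε : d ≤ ε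
  · exact le_trans hdε (le_mul_of_one_le_left hε hC1)
  push_neg at hdε
  have hd0 : 0 < d := lt_of_le_of_lt hε hdε
  clear_value d
  set c := Real.sqrt (1 - ε ^ 2 / d ^ 2) with hc_def
  have hc2 : c ^ 2 = 1 - ε ^ 2 / d ^ 2 := by
    apply Real.sq_sqrt
    rw [sub_nonneg, div_le_one (by positivity)]
    nlinarith
  have hc0 : 0 ≤ c := Real.sqrt_nonneg _
  have hc1 : c ≤ 1 := by
    rw [hc_def, Real.sqrt_le_one]
    have : 0 ≤ ε ^ 2 / d ^ 2 := by positivity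
    linarith
  clear_value c
  classical
  set Bf := Finset.univ.filter (fun j => ε < ‖θ j - z‖) with hBf
  set Gf := Finset.univ.filter (fun j => ¬ ε < ‖θ j - z‖) with hGf
  have hGB : Bf.card + Gf.card = k := by
    rw [hBf, hGf, Finset.card_filter_add_card_filter_not, Finset.card_univ,
      Fintype.card_fin]
  set g := (Gf.card : ℝ) with hg_def
  set b := (Bf.card : ℝ) with hb_def
  have hd2c : d ^ 2 * (1 - c ^ 2) = ε ^ 2 := by
    rw [hc2]; field_simp; ring
  have key : g * (d * c) ≤ b * d := by
    refine le_of_forall_pos_le_add fun δ hδ => ?_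
    have hg0 : 0 ≤ g := Nat.cast_nonneg _
    set t := min ((d - ε) / (2 * d)) (δ * (d - ε) / (g * ε ^ 2 + 1)) with ht_def
    have hdε' : 0 < d - ε := by linarith
    have ht0 : 0 < t := lt_min (by positivity) (by positivity)
    have ht1 : t ≤ (d - ε) / (2 * d) := min_le_left _ _
    have ht2 : t ≤ δ * (d - ε) / (g * ε ^ 2 + 1) := min_le_right _ _
    have htd : t * d ≤ (d - ε) / 2 := by
      have := mul_le_mul_of_nonneg_right ht1 hd0.le
      have h2 : (d - ε) / (2 * d) * d = (d - ε) / 2 := by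
        field_simp
      rw [h2] at this
      exact this
    clear_value t
    set v := m - z with hv_def
    set y := m - t • v with hy_def
    clear_value y
    have hv : ‖v‖ = d := by rw [hv_def, hd_def]
    have hmy : ‖m - y‖ = t * d := by
      have h0 : m - y = t • v := by rw [hy_def]; abel
      rw [h0, norm_smul, Real.norm_eq_abs, abs_of_pos ht0, hv]
    have hgood : ∀ j ∈ Gf, t * d * c - t ^ 2 * ε ^ 2 / (d - ε) ≤ ‖m - θ j‖ - ‖y - θ j‖ := by
      intro j hj
      have hjε : ‖θ j - z‖ ≤ ε := by
        rw [hGf, Finset.mem_filter] at hj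
        exact not_lt.mp hj.2
      set w := θ j - z with hw_def
      have hvw : m - θ j = v - w := by rw [hv_def, hw_def]; abel
      have hyj : y - θ j = (v - w) - t • v := by rw [hy_def, hv_def, hw_def]; abel
      have hcos : d * c * ‖v - w‖ ≤ inner ℝ (v - w) v := by
        rw [hc_def]
        exact cos_ineq v w ε d hε hdε hv hjε
      have hnsq : ‖y - θ j‖ ^ 2 = ‖v - w‖ ^ 2 - 2 * t * inner ℝ (v - w) v + t ^ 2 * d ^ 2 := by
        rw [hyj, norm_sub_sq_real, real_inner_smul_right, norm_smul, Real.norm_eq_abs]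
        rw [mul_pow, sq_abs, hv]
        ring
      have hvwlb : d - ε ≤ ‖v - w‖ := by
        have h1 := norm_sub_norm_le v w
        rw [hv] at h1; linarith
      have htdc : t * d * c ≤ (d - ε) / 2 := by
        have h2a : t * d * c ≤ t * d * 1 :=
          mul_le_mul_of_nonneg_left hc1 (mul_nonneg ht0.le hd0.le)
        rw [mul_one] at h2a
        linarith
      set A := ‖v - w‖ - t * d * c with hA_def
      have hA2 : (d - ε) / 2 ≤ A := by rw [hA_def]; linarith
      have hA0 : 0 < A := lt_of_lt_of_le (by linarith) hA2
      have h3 : t ^ 2 * (d ^ 2 * (1 - c ^ 2)) = t ^ 2 * ε ^ 2 := by rw [hd2c]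
      have hRHS : (‖v - w‖ - t * d * c) ^ 2 + t ^ 2 * ε ^ 2
          = ‖v - w‖ ^ 2 - 2 * t * (d * c * ‖v - w‖) + t ^ 2 * d ^ 2 := by
        linear_combination -h3
      have hsq : ‖y - θ j‖ ^ 2 ≤ A ^ 2 + t ^ 2 * ε ^ 2 := by
        rw [hnsq, hA_def, hRHS]
        have hlin := mul_le_mul_of_nonneg_left hcos (by linarith : (0:ℝ) ≤ 2 * t)
        nlinarith [hlin]
      have h4 : ‖y - θ j‖ ≤ Real.sqrt (A ^ 2 + t ^ 2 * ε ^ 2) := by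
        rw [← Real.sqrt_sq (norm_nonneg (y - θ j))]
        exact Real.sqrt_le_sqrt hsq
      have h5 := sqrt_add_le hA0 (by positivity : (0:ℝ) ≤ t ^ 2 * ε ^ 2)
      have h6 : t ^ 2 * ε ^ 2 / (2 * A) ≤ t ^ 2 * ε ^ 2 / (d - ε) := by
        apply div_le_div_of_nonneg_left (by positivity) hdε'
        linarith
      rw [hvw]
      have : ‖y - θ j‖ ≤ A + t ^ 2 * ε ^ 2 / (d - ε) := by linarith
      rw [hA_def] at this
      linarith
    have hbad : ∀ j ∈ Bf, -(t * d) ≤ ‖m - θ j‖ - ‖y - θ j‖ := by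
      intro j _
      have h7 : ‖y - θ j‖ ≤ ‖m - y‖ + ‖m - θ j‖ := by
        have h8 := norm_add_le (y - m) (m - θ j)
        have h9 : (y - m) + (m - θ j) = y - θ j := by abel
        rw [h9] at h8
        rw [norm_sub_rev y m] at h8
        exact h8
      rw [hmy] at h7; linarith
    have hsum := hm y
    have hsplit : ∑ j, (‖m - θ j‖ - ‖y - θ j‖) ≤ 0 := by
      rw [Finset.sum_sub_distrib]; linarith
    have hGsum := Finset.card_nsmul_le_sum Gf (fun j => ‖m - θ j‖ - ‖y - θ j‖)
      (t * d * c - t ^ 2 * ε ^ 2 / (d - ε)) hgood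
    have hBsum := Finset.card_nsmul_le_sum Bf (fun j => ‖m - θ j‖ - ‖y - θ j‖)
      (-(t * d)) hbad
    rw [nsmul_eq_mul] at hGsum hBsum
    have htotal : ∑ j ∈ Bf, (‖m - θ j‖ - ‖y - θ j‖) + ∑ j ∈ Gf, (‖m - θ j‖ - ‖y - θ j‖)
        = ∑ j, (‖m - θ j‖ - ‖y - θ j‖) :=
      Finset.sum_filter_add_sum_filter_not Finset.univ _ _
    have hmain : g * (t * d * c - t ^ 2 * ε ^ 2 / (d - ε)) + b * (-(t * d)) ≤ 0 := by
      calc g * (t * d * c - t ^ 2 * ε ^ 2 / (d - ε)) + b * (-(t * d))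
          ≤ ∑ j ∈ Gf, (‖m - θ j‖ - ‖y - θ j‖) + ∑ j ∈ Bf, (‖m - θ j‖ - ‖y - θ j‖) := by
            exact add_le_add hGsum hBsum
        _ = ∑ j, (‖m - θ j‖ - ‖y - θ j‖) := by rw [add_comm]; exact htotal
        _ ≤ 0 := hsplit
    have hpen : g * t * ε ^ 2 ≤ δ * (d - ε) := by
      have h10 := mul_le_mul_of_nonneg_left ht2 (mul_nonneg hg0 (sq_nonneg ε))
      have h11 : g * ε ^ 2 * (δ * (d - ε) / (g * ε ^ 2 + 1)) ≤ δ * (d - ε) := by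
        rw [mul_div_assoc']
        rw [div_le_iff₀ (by positivity)]
        nlinarith [mul_nonneg (mul_nonneg hδ.le hdε'.le) (mul_nonneg hg0 (sq_nonneg ε))]
      calc g * t * ε ^ 2 = g * ε ^ 2 * t := by ring
        _ ≤ g * ε ^ 2 * (δ * (d - ε) / (g * ε ^ 2 + 1)) := h10
        _ ≤ δ * (d - ε) := h11
    have hp2 : g * (t ^ 2 * ε ^ 2 / (d - ε)) ≤ t * δ := by
      rw [show g * (t ^ 2 * ε ^ 2 / (d - ε)) = g * t * ε ^ 2 * t / (d - ε) by ring]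
      rw [div_le_iff₀ hdε']
      calc g * t * ε ^ 2 * t ≤ δ * (d - ε) * t := mul_le_mul_of_nonneg_right hpen ht0.le
        _ = t * δ * (d - ε) := by ring
    have hfinal : t * (g * (d * c)) ≤ t * (b * d + δ) := by nlinarith [hmain, hp2]
    exact le_of_mul_le_mul_left hfinal ht0
  have hg_eq : g + b = (k : ℝ) := by
    have h14 := congrArg (Nat.cast : ℕ → ℝ) hGB
    push_cast at h14
    rw [hg_def, hb_def]
    linarith
  have hk1 : (1:ℝ) ≤ k := Nat.one_le_cast.mpr hk
  have hgpos : 0 < g := by nlinarith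
  have hcb : g * c ≤ b := by
    have h15 : g * c * d ≤ b * d := by nlinarith [key]
    exact le_of_mul_le_mul_right h15 hd0
  have hcα : (1 - α) * k * c ≤ α * k := by
    have h16 : (1 - α) * k ≤ g := by linarith
    calc (1 - α) * k * c ≤ g * c := mul_le_mul_of_nonneg_right h16 hc0
      _ ≤ b := hcb
      _ ≤ α * k := hcard
  have hcval : c * (1 - α) ≤ α := by
    have hk0 : (0:ℝ) < k := by linarith
    nlinarith
  have hc2' : (c * (1 - α)) ^ 2 ≤ α ^ 2 := by nlinarith [mul_nonneg hc0 (by linarith : (0:ℝ) ≤ 1 - α)]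
  have hd2 : d ^ 2 * (1 - 2 * α) ≤ ε ^ 2 * (1 - α) ^ 2 := by
    have h17 : (1 - ε ^ 2 / d ^ 2) * (1 - α) ^ 2 ≤ α ^ 2 := by nlinarith [hc2, hc2']
    have h18 := mul_le_mul_of_nonneg_right h17 (sq_nonneg d)
    have h19 : (1 - ε ^ 2 / d ^ 2) * d ^ 2 = d ^ 2 - ε ^ 2 := by field_simp
    nlinarith [h18, h19]
  have hCsq : d ^ 2 ≤ (Cconst α * ε) ^ 2 := by
    have h20 : (Cconst α * ε) ^ 2 = (1 - α) ^ 2 * ε ^ 2 * (1 / (1 - 2 * α)) := by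
      rw [Cconst, mul_pow, mul_pow, Real.sq_sqrt (by positivity : (0:ℝ) ≤ 1 / (1 - 2 * α))]
      ring
    rw [h20, mul_one_div, le_div_iff₀ h2α]
    linarith [hd2]
  calc d = Real.sqrt (d ^ 2) := (Real.sqrt_sq hd0.le).symm
    _ ≤ Real.sqrt ((Cconst α * ε) ^ 2) := Real.sqrt_le_sqrt hCsq
    _ = Cconst α * ε := Real.sqrt_sq (mul_nonneg hC0 hε)

set_option maxHeartbeats 1000000 in
/-- **Robustness property of DRL.** If the independent estimates `θ̂ j`, for `j` in a subset `J`
of at least `(1 - γ) k` machines, each deviate from `θ*` by more than `ε` with probability at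
most `β* < α` (the remaining machines being arbitrary), then the geometric median `θ̃` of all
the estimates satisfies `‖θ̃ - θ*‖ ≤ C_α ε` with probability at least
`1 - exp(-k (1 - γ) ψ((α - γ)/(1 - γ), β*))`. -/
theorem drl_robust {Ω H : Type*} [MeasurableSpace Ω]
    [NormedAddCommGroup H] [InnerProductSpace ℝ H] [CompleteSpace H]
    [MeasurableSpace H] [BorelSpace H]
    (P : Measure Ω) [IsProbabilityMeasure P]
    {k : ℕ} (θhat : Fin k → Ω → H) (θstar : H) (ε : ℝ) (hε : 0 ≤ ε)
    (α βs : ℝ) (hα : α ∈ Set.Ioo (0 : ℝ) (1 / 2)) (hβs : βs ∈ Set.Ioo (0 : ℝ) α)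
    (γ : ℝ) (hγ0 : 0 ≤ γ) (hγ : γ < (α - βs) / (1 - βs))
    (hmeas : ∀ j, Measurable (θhat j))
    (hindep : iIndepFun θhat P)
    (J : Finset (Fin k)) (hJcard : (1 - γ) * k ≤ J.card)
    (hdev : ∀ j ∈ J, P {ω | ε < ‖θhat j ω - θstar‖} ≤ ENNReal.ofReal βs)
    (θtilde : Ω → H)
    (hmed : ∀ ω, IsGeomMedian (fun j => θhat j ω) (θtilde ω)) :
    ENNReal.ofReal (1 - Real.exp (-(k * (1 - γ) * psi ((α - γ) / (1 - γ)) βs)))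
      ≤ P {ω | ‖θtilde ω - θstar‖ ≤ Cconst α * ε} := by
  classical
  obtain ⟨hα0, hα2⟩ := hα
  obtain ⟨hβ0, hβα⟩ := hβs
  rcases Nat.eq_zero_or_pos k with hk0 | hk
  · subst hk0
    simp
  have hβ1 : βs < 1 := by linarith
  have hγ1 : γ < 1 := by
    have h1 : (α - βs) / (1 - βs) < 1 := (div_lt_one (by linarith)).mpr (by linarith)
    linarith
  have h1γ : (0:ℝ) < 1 - γ := by linarith
  set a := (α - γ) / (1 - γ) with ha_def
  have haβ : βs < a := by
    rw [ha_def, lt_div_iff₀ h1γ]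
    have h2 := (lt_div_iff₀ (by linarith : (0:ℝ) < 1 - βs)).mp hγ
    nlinarith
  have ha1 : a < 1 := by rw [ha_def, div_lt_one h1γ]; linarith
  have ha0 : 0 < a := lt_trans hβ0 haβ
  have h1a : (0:ℝ) < 1 - a := by linarith
  set t := Real.log (a * (1 - βs) / (βs * (1 - a))) with ht_def
  have hearg : 0 < a * (1 - βs) / (βs * (1 - a)) :=
    div_pos (mul_pos ha0 (by linarith)) (mul_pos hβ0 h1a)
  have het : Real.exp t = a * (1 - βs) / (βs * (1 - a)) := Real.exp_log hearg
  have het1 : 1 ≤ Real.exp t := by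
    rw [het, le_div_iff₀ (mul_pos hβ0 h1a)]
    nlinarith
  have ht0 : 0 ≤ t := by
    apply Real.exp_le_exp.mp
    rwa [Real.exp_zero]
  set Λ := Real.log ((1 - βs) / (1 - a)) with hΛ_def
  have hΛe : Real.exp Λ = (1 - βs) / (1 - a) := Real.exp_log (div_pos (by linarith) h1a)
  have hΛ0 : 0 ≤ Λ := Real.log_nonneg ((le_div_iff₀ h1a).mpr (by linarith))
  have hBe : 1 + (Real.exp t - 1) * βs = (1 - βs) / (1 - a) := by
    rw [het]; field_simp; ring
  have htΛ : Λ ≤ t := by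
    rw [ht_def, hΛ_def]
    apply Real.log_le_log (div_pos (by linarith) h1a)
    rw [div_le_div_iff₀ h1a (mul_pos hβ0 h1a)]
    nlinarith [mul_le_mul_of_nonneg_right
      (mul_le_mul_of_nonneg_right haβ.le (by linarith : (0:ℝ) ≤ 1 - βs)) h1a.le]
  have hpsi : psi a βs = t * a - Λ := by
    rw [psi, ht_def, hΛ_def]
    have h3 : a * (1 - βs) / (βs * (1 - a)) = (a / βs) * ((1 - βs) / (1 - a)) := by
      field_simp
    rw [h3, Real.log_mul (ne_of_gt (div_pos ha0 hβ0)) (ne_of_gt (div_pos (by linarith : (0:ℝ) < 1 - βs) h1a))]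
    have h4 : (1 - a) / (1 - βs) = ((1 - βs) / (1 - a))⁻¹ := by
      rw [inv_div]
    rw [h4, Real.log_inv]
    ring
  -- random variables
  set A : Fin k → Set Ω := fun j => {ω | ε < ‖θhat j ω - θstar‖} with hA_def
  have hHmeas : MeasurableSet {x : H | ε < ‖x - θstar‖} :=
    measurableSet_lt measurable_const ((measurable_id.sub_const θstar).norm)
  have hAmeas : ∀ j, MeasurableSet (A j) := fun j => (hmeas j) hHmeas
  set X : Fin k → Ω → ℝ :=
    fun j => (fun x : H => if ε < ‖x - θstar‖ then (1:ℝ) else 0) ∘ θhat j with hX_def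
  have hgm : Measurable (fun x : H => if ε < ‖x - θstar‖ then (1:ℝ) else 0) :=
    Measurable.ite hHmeas measurable_const measurable_const
  have hXmeas : ∀ j, Measurable (X j) := fun j => hgm.comp (hmeas j)
  have hXindep : iIndepFun X P :=
    hindep.comp _ (fun _ => hgm)
  set S := ∑ j ∈ J, X j with hS_def
  have hSapp : ∀ ω, S ω = ∑ j ∈ J, X j ω := by
    intro ω; rw [hS_def, Finset.sum_apply]
  have hSmeas : Measurable S := by
    rw [hS_def, show (∑ j ∈ J, X j) = fun a => ∑ j ∈ J, X j a from
      funext fun a => Finset.sum_apply a J X]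
    exact Finset.measurable_sum J (fun j _ => hXmeas j)
  set u := (J.card : ℝ) - (1 - α) * k with hu_def
  -- the good event is included in the success event
  have hE : {ω | S ω ≤ u} ⊆ {ω | ‖θtilde ω - θstar‖ ≤ Cconst α * ε} := by
    intro ω hω
    simp only [Set.mem_setOf_eq] at hω ⊢
    apply median_close hk (fun j => θhat j ω) (θtilde ω) θstar (hmed ω) ⟨hα0, hα2⟩ hε
    set Bs := Finset.univ.filter (fun j => ε < ‖θhat j ω - θstar‖) with hBs_def
    have hsplit : (Bs ∩ J).card + (Bs \ J).card = Bs.card :=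
      Finset.card_inter_add_card_sdiff Bs J
    have h1 : ((Bs ∩ J).card : ℝ) = ∑ j ∈ J, X j ω := by
      have h1a' : Bs ∩ J = J.filter (fun j => ε < ‖θhat j ω - θstar‖) := by
        ext x
        simp [hBs_def, and_comm]
      rw [h1a']
      simp only [hX_def, Function.comp_apply]
      exact (Finset.sum_boole _ _).symm
    have h2 : ((Bs \ J).card : ℝ) ≤ (k : ℝ) - J.card := by
      have h2a : Bs \ J ⊆ Finset.univ \ J := by
        apply Finset.sdiff_subset_sdiff (Finset.subset_univ Bs) le_rfl
      have h2b : (Bs \ J).card ≤ (Finset.univ \ J).card := Finset.card_le_card h2a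
      have h2c : (Finset.univ \ J).card = k - J.card := by
        rw [Finset.card_sdiff_of_subset (Finset.subset_univ J), Finset.card_univ, Fintype.card_fin]
      have h2d : J.card ≤ k := by
        have := Finset.card_le_card (Finset.subset_univ J)
        simpa using this
      rw [h2c] at h2b
      have := (Nat.cast_le (α := ℝ)).mpr h2b
      rw [Nat.cast_sub h2d] at this
      exact this
    have h3 : ((Bs ∩ J).card : ℝ) + ((Bs \ J).card : ℝ) = (Bs.card : ℝ) := by
      exact_mod_cast congrArg (Nat.cast : ℕ → ℝ) hsplit
    rw [hSapp] at hω
    have : (Bs.card : ℝ) ≤ α * k := by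
      rw [← h3, h1]
      linarith
    exact this
  have hEmeas : MeasurableSet {ω | S ω ≤ u} := measurableSet_le hSmeas measurable_const
  -- integrability
  have hXint : ∀ j, Integrable (fun ω => Real.exp (t * X j ω)) P := by
    intro j
    have heq : (fun ω => Real.exp (t * X j ω))
        = fun ω => (A j).indicator (fun _ => Real.exp t - 1) ω + 1 := by
      funext ω
      by_cases h : ε < ‖θhat j ω - θstar‖
      · have hmem : ω ∈ A j := h
        simp [hX_def, h, Set.indicator_of_mem hmem]
      · have hmem : ω ∉ A j := h
        simp [hX_def, h, Set.indicator_of_notMem hmem]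
    rw [heq]
    exact ((integrable_const _).indicator (hAmeas j)).add (integrable_const 1)
  have hmgf_le : ∀ j ∈ J, mgf (X j) P t ≤ (1 - βs) / (1 - a) := by
    intro j hj
    have heq : (fun ω => Real.exp (t * X j ω))
        = fun ω => (A j).indicator (fun _ => Real.exp t - 1) ω + 1 := by
      funext ω
      by_cases h : ε < ‖θhat j ω - θstar‖
      · have hmem : ω ∈ A j := h
        simp [hX_def, h, Set.indicator_of_mem hmem]
      · have hmem : ω ∉ A j := h
        simp [hX_def, h, Set.indicator_of_notMem hmem]
    have hval : mgf (X j) P t = (Real.exp t - 1) * (P (A j)).toReal + 1 := by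
      rw [mgf, heq]
      rw [integral_add ((integrable_const _).indicator (hAmeas j)) (integrable_const 1)]
      rw [integral_indicator_const _ (hAmeas j), integral_const]
      simp [mul_comm, measureReal_def]
    have hPA : (P (A j)).toReal ≤ βs := by
      have := hdev j hj
      have h5 : (P (A j)).toReal ≤ (ENNReal.ofReal βs).toReal :=
        ENNReal.toReal_mono ENNReal.ofReal_ne_top this
      rwa [ENNReal.toReal_ofReal hβ0.le] at h5
    rw [hval, ← hBe]
    have h6 : (Real.exp t - 1) * (P (A j)).toReal ≤ (Real.exp t - 1) * βs :=
      mul_le_mul_of_nonneg_left hPA (by linarith)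
    linarith
  have hSint : Integrable (fun ω => Real.exp (t * S ω)) P := by
    rw [hS_def]
    exact hXindep.integrable_exp_mul_sum hXmeas (fun j _ => hXint j)
  have hchern := measure_ge_le_exp_mul_mgf u ht0 hSint
  have hmgfS : mgf S P t = ∏ j ∈ J, mgf (X j) P t := by
    rw [hS_def]
    exact hXindep.mgf_sum hXmeas J
  have hprod : ∏ j ∈ J, mgf (X j) P t ≤ ((1 - βs) / (1 - a)) ^ J.card := by
    calc ∏ j ∈ J, mgf (X j) P t ≤ ∏ _j ∈ J, (1 - βs) / (1 - a) :=
          Finset.prod_le_prod (fun j _ => mgf_nonneg) hmgf_le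
      _ = ((1 - βs) / (1 - a)) ^ J.card := Finset.prod_const _
  have hnk : (1 - γ) * k ≤ (J.card : ℝ) := hJcard
  have hpow : ((1 - βs) / (1 - a)) ^ J.card = Real.exp ((J.card : ℝ) * Λ) := by
    rw [← hΛe, ← Real.exp_nat_mul]
  have hfin : Real.exp (-t * u) * ((1 - βs) / (1 - a)) ^ J.card
      ≤ Real.exp (-(k * (1 - γ) * psi a βs)) := by
    rw [hpow, ← Real.exp_add]
    apply Real.exp_le_exp.mpr
    rw [hu_def, hpsi]
    have h7 : 0 ≤ ((J.card : ℝ) - (1 - γ) * k) * (t - Λ) :=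
      mul_nonneg (by linarith) (by linarith)
    have h8 : a * ((1 - γ) * k) = (α - γ) * k := by
      rw [ha_def]
      field_simp
    nlinarith [h7, h8]
  -- assemble
  have hPEc : P {ω | S ω ≤ u}ᶜ ≤ ENNReal.ofReal (Real.exp (-(k * (1 - γ) * psi a βs))) := by
    have hsub : {ω | S ω ≤ u}ᶜ ⊆ {ω | u ≤ S ω} := by
      intro ω hω
      simp only [Set.mem_compl_iff, Set.mem_setOf_eq, not_le] at hω
      exact le_of_lt hω
    refine le_trans (measure_mono hsub) ?_
    rw [ENNReal.le_ofReal_iff_toReal_le (measure_ne_top P _) (Real.exp_nonneg _)]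
    calc (P {ω | u ≤ S ω}).toReal ≤ Real.exp (-t * u) * mgf S P t := hchern
      _ ≤ Real.exp (-t * u) * ((1 - βs) / (1 - a)) ^ J.card := by
          rw [hmgfS]
          exact mul_le_mul_of_nonneg_left hprod (Real.exp_nonneg _)
      _ ≤ Real.exp (-(k * (1 - γ) * psi a βs)) := hfin
  calc ENNReal.ofReal (1 - Real.exp (-(k * (1 - γ) * psi a βs)))
      = 1 - ENNReal.ofReal (Real.exp (-(k * (1 - γ) * psi a βs))) := by
        rw [ENNReal.ofReal_sub 1 (Real.exp_nonneg _), ENNReal.ofReal_one]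
    _ ≤ 1 - P {ω | S ω ≤ u}ᶜ := tsub_le_tsub_left hPEc 1
    _ = P {ω | S ω ≤ u} := by
        rw [prob_compl_eq_one_sub hEmeas]
        rw [ENNReal.sub_sub_cancel ENNReal.one_ne_top prob_le_one]
    _ ≤ P {ω | ‖θtilde ω - θstar‖ ≤ Cconst α * ε} := measure_mono hE
end

section
/- Deviation of the geometric median forces many deviating points: Let H be a real Hilbert space, θ_1, …, θ_k ∈ H, θ* ∈ H, ε ≥ 0, α ∈ (0, 1/2), and 0 ≤ γ < α. Let J ⊆ {1, …, k} with |J| ≥ (1 − γ)·k. If some geometric median θ̃ of θ_1, …, θ_k satisfies ‖θ̃ − θ*‖ > C_α · ε, then at least (α − γ)·k of the indices j ∈ J satisfy ‖θ_j − θ*‖ > ε. -/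
open scoped BigOperators
open scoped RealInnerProductSpace

set_option maxHeartbeats 1000000

/-- Quadratic upper bound for moving in a favorable direction. -/
lemma aux_norm_sub_smul {H : Type*} [NormedAddCommGroup H] [InnerProductSpace ℝ H]
    (u w : H) (t c : ℝ) (hu : ‖u‖ = 1) (hw : 0 < ‖w‖) (ht : 0 ≤ t)
    (hc0 : 0 ≤ c) (hc1 : c ≤ 1) (hcw : c * ‖w‖ ≤ ⟪u, w⟫) :
    ‖w - t • u‖ ≤ ‖w‖ - c * t + t ^ 2 / (2 * ‖w‖) := by
  set s := ‖w‖ with hs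
  set q := t ^ 2 / (2 * s) with hq
  have hqs : 2 * s * q = t ^ 2 := by
    rw [hq]; field_simp [hw.ne']
  have hq0 : 0 ≤ q := by positivity
  have hsq : ‖w - t • u‖ ^ 2 = s ^ 2 - 2 * t * ⟪u, w⟫ + t ^ 2 := by
    rw [norm_sub_sq_real, real_inner_smul_right, norm_smul, real_inner_comm]
    rw [hu]
    simp [abs_of_nonneg ht]
    ring
  have hR : 0 ≤ s - c * t + q := by
    nlinarith [sq_nonneg (s - t), sq_nonneg t, mul_pos hw hw]
  have hsq2 : ‖w - t • u‖ ^ 2 ≤ (s - c * t + q) ^ 2 := by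
    nlinarith [sq_nonneg (c * t - q), mul_le_mul_of_nonneg_left hcw (by linarith : (0:ℝ) ≤ 2 * t)]
  exact (abs_le_of_sq_le_sq' hsq2 hR).2

/-- Pure-real cosine lower bound. -/
lemma aux_cos_bound (r ε a E n : ℝ) (hε : 0 ≤ ε) (hεr : ε < r)
    (haE : |a| ≤ E) (hEε : E ≤ ε) (hn0 : 0 ≤ n)
    (hn : n ^ 2 = r ^ 2 + 2 * r * a + E ^ 2) :
    Real.sqrt (r ^ 2 - ε ^ 2) / r * n ≤ r + a := by
  have hr : 0 < r := lt_of_le_of_lt hε hεr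
  have ha1 : -ε ≤ a := by
    have := (abs_le.mp haE).1; linarith
  have hra : 0 < r + a := by linarith
  have hre2 : 0 ≤ r ^ 2 - ε ^ 2 := by nlinarith
  have hsq : (Real.sqrt (r ^ 2 - ε ^ 2)) ^ 2 = r ^ 2 - ε ^ 2 := Real.sq_sqrt hre2
  have key : (Real.sqrt (r ^ 2 - ε ^ 2) / r * n) ^ 2 ≤ (r + a) ^ 2 := by
    have hE2 : E ^ 2 ≤ ε ^ 2 := by nlinarith [abs_nonneg a, le_trans (abs_nonneg a) haE]
    have h1 : (Real.sqrt (r ^ 2 - ε ^ 2) / r * n) ^ 2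
        = (r ^ 2 - ε ^ 2) * n ^ 2 / r ^ 2 := by
      field_simp; rw [hsq]
    rw [h1, hn]
    rw [div_le_iff₀ (by positivity : (0:ℝ) < r ^ 2)]
    nlinarith [sq_nonneg (a * r + ε ^ 2), mul_nonneg hre2 (by linarith : (0:ℝ) ≤ ε ^ 2 - E ^ 2)]
  have hL0 : 0 ≤ Real.sqrt (r ^ 2 - ε ^ 2) / r * n := by positivity
  nlinarith [key, hL0, hra]

/-- **Deviation of the geometric median forces many deviating points.** If a geometric median
of `θ 1, …, θ k` deviates from `θ*` by more than `C_α ε`, then, for any subset `J` of at least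
`(1 - γ) k` indices, at least `(α - γ) k` of the indices `j ∈ J` satisfy `‖θ j - θ*‖ > ε`. -/
theorem geomMedian_deviation_forces_many_deviations
    {H : Type*} [NormedAddCommGroup H] [InnerProductSpace ℝ H] [CompleteSpace H]
    {k : ℕ} (θ : Fin k → H) (θstar : H) (ε : ℝ) (hε : 0 ≤ ε)
    (α : ℝ) (hα : α ∈ Set.Ioo (0 : ℝ) (1 / 2))
    (γ : ℝ) (hγ0 : 0 ≤ γ) (hγα : γ < α)
    (J : Finset (Fin k)) (hJcard : (1 - γ) * k ≤ J.card)
    (θtilde : H) (hmed : IsGeomMedian θ θtilde)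
    (hdev : Cconst α * ε < ‖θtilde - θstar‖) :
    (α - γ) * k ≤ ((J.filter fun j => ε < ‖θ j - θstar‖).card : ℝ) := by
  obtain ⟨hα0, hα2⟩ := hα
  rcases Nat.eq_zero_or_pos k with hk0 | hkpos
  · subst hk0
    norm_num
  have h2α : 0 < 1 - 2 * α := by linarith
  have h1α : 0 < 1 - α := by linarith
  set r := ‖θtilde - θstar‖ with hrdef
  -- C_α ≥ 1
  have hsC : (Real.sqrt (1 / (1 - 2 * α))) ^ 2 = 1 / (1 - 2 * α) :=
    Real.sq_sqrt (by positivity)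
  have hsC0 : 0 ≤ Real.sqrt (1 / (1 - 2 * α)) := Real.sqrt_nonneg _
  have hident : (1 - 2 * α) * (1 / (1 - 2 * α)) = 1 := by field_simp
  have hC1 : 1 ≤ Cconst α := by
    unfold Cconst
    nlinarith [sq_nonneg ((1 - α) * Real.sqrt (1 / (1 - 2 * α)) - 1), sq_nonneg α,
      mul_nonneg (le_of_lt h1α) hsC0]
  have hC0 : 0 ≤ Cconst α := by linarith
  have hr0 : 0 < r := lt_of_le_of_lt (mul_nonneg hC0 hε) hdev
  have hεr : ε < r := by
    have : ε ≤ Cconst α * ε := by nlinarith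
    linarith
  -- unit direction
  set u := r⁻¹ • (θstar - θtilde) with hudef
  have hnorm_ts : ‖θstar - θtilde‖ = r := norm_sub_rev _ _
  have hu : ‖u‖ = 1 := by
    rw [hudef, norm_smul, hnorm_ts, norm_inv, Real.norm_eq_abs, abs_of_pos hr0,
      inv_mul_cancel₀ hr0.ne']
  have hru : r • u = θstar - θtilde := by
    rw [hudef, smul_smul, mul_inv_cancel₀ hr0.ne', one_smul]
  -- the cosine constant
  set c := Real.sqrt (r ^ 2 - ε ^ 2) / r with hcdef
  have hre2 : (0:ℝ) ≤ r ^ 2 - ε ^ 2 := by nlinarith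
  have hc0 : 0 ≤ c := by positivity
  have hc1 : c ≤ 1 := by
    rw [hcdef, div_le_one hr0]
    calc Real.sqrt (r ^ 2 - ε ^ 2) ≤ Real.sqrt (r ^ 2) := Real.sqrt_le_sqrt (by nlinarith)
      _ = r := Real.sqrt_sq hr0.le
  -- the set of non-deviating points
  set F := Finset.univ.filter (fun j : Fin k => ‖θ j - θstar‖ ≤ ε) with hFdef
  have hmemF : ∀ j, j ∈ F ↔ ‖θ j - θstar‖ ≤ ε := by
    intro j; simp [hFdef]
  have hwF : ∀ j ∈ F, r - ε ≤ ‖θ j - θtilde‖ := by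
    intro j hj
    have hjε : ‖θ j - θstar‖ ≤ ε := (hmemF j).mp hj
    have htri : ‖θtilde - θstar‖ ≤ ‖θtilde - θ j‖ + ‖θ j - θstar‖ :=
      norm_sub_le_norm_sub_add_norm_sub _ _ _
    rw [norm_sub_rev θtilde (θ j)] at htri
    linarith
  have hwpos : ∀ j ∈ F, 0 < ‖θ j - θtilde‖ := by
    intro j hj
    have := hwF j hj
    linarith
  have hcos : ∀ j ∈ F, c * ‖θ j - θtilde‖ ≤ ⟪u, θ j - θtilde⟫ := by
    intro j hj
    have hjε : ‖θ j - θstar‖ ≤ ε := (hmemF j).mp hj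
    have hdecomp : θ j - θtilde = (θ j - θstar) + r • u := by
      rw [hru]; abel
    have hinner : ⟪u, θ j - θtilde⟫ = r + ⟪u, θ j - θstar⟫ := by
      rw [hdecomp, inner_add_right, real_inner_smul_right, real_inner_self_eq_norm_sq, hu]
      ring
    have hnormsq : ‖θ j - θtilde‖ ^ 2
        = r ^ 2 + 2 * r * ⟪u, θ j - θstar⟫ + ‖θ j - θstar‖ ^ 2 := by
      rw [hdecomp, norm_add_sq_real, real_inner_smul_right, norm_smul, Real.norm_eq_abs,
        abs_of_pos hr0, hu, real_inner_comm]
      ring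
    have haE : |⟪u, θ j - θstar⟫| ≤ ‖θ j - θstar‖ := by
      have := abs_real_inner_le_norm u (θ j - θstar)
      rwa [hu, one_mul] at this
    have := aux_cos_bound r ε ⟪u, θ j - θstar⟫ ‖θ j - θstar‖ ‖θ j - θtilde‖
      hε hεr haE hjε (norm_nonneg _) hnormsq
    rw [hinner, hcdef]
    exact this
  -- per-t inequality, already divided by t
  have hdiv : ∀ t : ℝ, 0 < t →
      c * (F.card : ℝ) ≤ ((k : ℝ) - F.card) + (F.card : ℝ) * (t / (2 * (r - ε))) := by
    intro t ht
    have hmt := hmed (θtilde + t • u)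
    have hrw1 : ∀ j : Fin k, ‖θtilde + t • u - θ j‖ = ‖(θ j - θtilde) - t • u‖ := by
      intro j
      rw [← norm_neg]
      congr 1
      abel
    have hrw2 : ∀ j : Fin k, ‖θtilde - θ j‖ = ‖θ j - θtilde‖ := fun j => norm_sub_rev _ _
    simp only [hrw1, hrw2] at hmt
    have hbound : ∑ j, ‖(θ j - θtilde) - t • u‖
        ≤ ∑ j, (‖θ j - θtilde‖ +
            (if ‖θ j - θstar‖ ≤ ε then -(c * t) + t ^ 2 / (2 * (r - ε)) else t)) := by
      apply Finset.sum_le_sum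
      intro j _
      by_cases hj : ‖θ j - θstar‖ ≤ ε
      · have hjF : j ∈ F := (hmemF j).mpr hj
        rw [if_pos hj]
        have h := aux_norm_sub_smul u (θ j - θtilde) t c hu (hwpos j hjF) ht.le hc0 hc1
          (hcos j hjF)
        have hmono : t ^ 2 / (2 * ‖θ j - θtilde‖) ≤ t ^ 2 / (2 * (r - ε)) := by
          apply div_le_div_of_nonneg_left (by positivity) (by linarith) _
          linarith [hwF j hjF]
        linarith
      · rw [if_neg hj]
        calc ‖(θ j - θtilde) - t • u‖ ≤ ‖θ j - θtilde‖ + ‖t • u‖ := norm_sub_le _ _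
          _ = ‖θ j - θtilde‖ + t := by
              rw [norm_smul, hu, Real.norm_eq_abs, abs_of_pos ht, mul_one]
    have hsum : ∑ j : Fin k, (‖θ j - θtilde‖ +
          (if ‖θ j - θstar‖ ≤ ε then -(c * t) + t ^ 2 / (2 * (r - ε)) else t))
        = (∑ j, ‖θ j - θtilde‖) + ((F.card : ℝ) * (-(c * t) + t ^ 2 / (2 * (r - ε)))
            + ((k : ℝ) - F.card) * t) := by
      rw [Finset.sum_add_distrib, Finset.sum_ite, Finset.sum_const, Finset.sum_const]
      have hcardN : ((Finset.univ.filter fun j : Fin k => ¬ ‖θ j - θstar‖ ≤ ε).card : ℝ)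
          = (k : ℝ) - F.card := by
        have := Finset.card_filter_add_card_filter_not
          (s := (Finset.univ : Finset (Fin k))) (p := fun j => ‖θ j - θstar‖ ≤ ε)
        have hcast : F.card + (Finset.univ.filter fun j : Fin k => ¬ ‖θ j - θstar‖ ≤ ε).card
            = k := by simpa [hFdef] using this
        have := congrArg (fun n : ℕ => (n : ℝ)) hcast
        push_cast at this
        linarith
      rw [nsmul_eq_mul, nsmul_eq_mul, hcardN, hFdef]
    rw [hsum] at hbound
    have hkey : c * (F.card : ℝ) * t
        ≤ (((k : ℝ) - F.card) + (F.card : ℝ) * (t / (2 * (r - ε)))) * t := by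
      have h0 : (0:ℝ) ≤ (F.card : ℝ) * (-(c * t) + t ^ 2 / (2 * (r - ε)))
          + ((k : ℝ) - F.card) * t := by linarith [le_trans hmt hbound]
      have hexp : (F.card : ℝ) * (t ^ 2 / (2 * (r - ε)))
          = (F.card : ℝ) * (t / (2 * (r - ε))) * t := by ring
      rw [add_mul, ← hexp]
      linarith
    exact le_of_mul_le_mul_right hkey ht
  -- pass to the limit t → 0
  have hmain : c * (F.card : ℝ) ≤ (k : ℝ) - F.card := by
    by_contra h
    push_neg at h
    set D := c * (F.card : ℝ) - ((k : ℝ) - F.card) with hD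
    have hD0 : 0 < D := by rw [hD]; linarith
    set t₀ := D * (r - ε) / ((F.card : ℝ) + 1) with ht₀
    have ht₀0 : 0 < t₀ := by
      apply div_pos (mul_pos hD0 (by linarith)) (by positivity)
    have hrε : r - ε ≠ 0 := ne_of_gt (by linarith)
    have hx : t₀ / (2 * (r - ε)) = D / (2 * ((F.card : ℝ) + 1)) := by
      rw [ht₀, div_div,
        show ((F.card : ℝ) + 1) * (2 * (r - ε)) = (2 * ((F.card : ℝ) + 1)) * (r - ε) by ring,
        mul_div_mul_right _ _ hrε]
    have hlt : (F.card : ℝ) * (t₀ / (2 * (r - ε))) < D := by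
      rw [hx, mul_div_assoc']
      rw [div_lt_iff₀ (by positivity : (0:ℝ) < 2 * ((F.card : ℝ) + 1))]
      nlinarith [Nat.cast_nonneg (α := ℝ) F.card]
    have := hdiv t₀ ht₀0
    rw [hD] at hlt
    linarith
  -- lower bound on c
  have hc_lb : α < c * (1 - α) := by
    have hr2 : (Cconst α * ε) ^ 2 < r ^ 2 := by
      nlinarith [mul_nonneg hC0 hε]
    have hCsq : (Cconst α * ε) ^ 2 = (1 - α) ^ 2 * (1 / (1 - 2 * α)) * ε ^ 2 := by
      unfold Cconst
      rw [mul_pow, mul_pow, hsC]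
    have hkey : ε ^ 2 * (1 - α) ^ 2 < r ^ 2 * (1 - 2 * α) := by
      rw [hCsq] at hr2
      nlinarith [hident, sq_nonneg ε]
    have hsq2 : (α * r) ^ 2 < (Real.sqrt (r ^ 2 - ε ^ 2) * (1 - α)) ^ 2 := by
      rw [mul_pow, mul_pow, Real.sq_sqrt hre2]
      nlinarith [hkey]
    have h2 : α * r < Real.sqrt (r ^ 2 - ε ^ 2) * (1 - α) :=
      lt_of_pow_lt_pow_left₀ 2 (by positivity) hsq2
    rw [hcdef, div_mul_eq_mul_div, lt_div_iff₀ hr0]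
    linarith [h2]
  -- F is small
  have hFk : c * (F.card : ℝ) + (F.card : ℝ) ≤ (k : ℝ) := by linarith
  have hk1 : (1:ℝ) ≤ (k : ℝ) := by exact_mod_cast hkpos
  have hF_lt : (F.card : ℝ) < (1 - α) * k := by
    by_contra h
    push_neg at h
    have hFpos : 0 < (F.card : ℝ) := by nlinarith
    nlinarith [mul_lt_mul_of_pos_right hc_lb hFpos]
  -- conclude by counting
  have h1 : (J.filter fun j => ¬ ε < ‖θ j - θstar‖) ⊆ F := by
    intro j hj
    rw [Finset.mem_filter] at hj
    exact (hmemF j).mpr (not_lt.mp hj.2)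
  have h1' : ((J.filter fun j => ¬ ε < ‖θ j - θstar‖).card : ℝ) ≤ (F.card : ℝ) := by
    exact_mod_cast Finset.card_le_card h1
  have h2 : (J.filter fun j => ε < ‖θ j - θstar‖).card
      + (J.filter fun j => ¬ ε < ‖θ j - θstar‖).card = J.card :=
    Finset.card_filter_add_card_filter_not (p := fun j => ε < ‖θ j - θstar‖)
  have h2' : ((J.filter fun j => ε < ‖θ j - θstar‖).card : ℝ)
      + ((J.filter fun j => ¬ ε < ‖θ j - θstar‖).card : ℝ) = (J.card : ℝ) := by
    exact_mod_cast h2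
  linarith
end
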